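/- Let C ⇄ A ⇄ H (with maps j, p, i, π) be a weak m-Hom admissible mapping system, with (C ♯_σ^× H, β ⊗ α) the Radford [(m,k),m]-biproduct monoidal Hom-bialgebra and (A, γ) a monoidal Hom-bialgebra. Then the map g: A → C ♯_σ^× H, g(a) = β(p(a₁)) ⊗ α(π(a₂)), is a homomorphism of monoidal Hom-coalgebras: Δ_{C ♯_σ^× H}(g(a)) = (g ⊗ g)Δ_A(a) and ε(g(a)) = ε_A(a) for all a ∈ A, and g∘γ = (β ⊗ α)∘g. -/

import Mathlib

open TensorProduct

noncomputable section

/-- A monoidal Hom-algebra `(A, β)`. -/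
structure HomAlgebraStr (K : Type*) (A : Type*) [Field K] [AddCommGroup A] [Module K A] where
  mul : A →ₗ[K] A →ₗ[K] A
  one : A
  str : A ≃ₗ[K] A
  hom_assoc : ∀ a b c : A, mul (str a) (mul b c) = mul (mul a b) (str c)
  str_mul : ∀ a b : A, str (mul a b) = mul (str a) (str b)
  mul_one : ∀ a : A, mul a one = str a
  one_mul : ∀ a : A, mul one a = str a
  str_one : str one = one

/-- A monoidal Hom-coalgebra `(C, γ)`. -/
structure HomCoalgebraStr (K : Type*) (C : Type*) [Field K] [AddCommGroup C] [Module K C] where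
  comul : C →ₗ[K] C ⊗[K] C
  counit : C →ₗ[K] K
  str : C ≃ₗ[K] C
  hom_coassoc : ∀ c : C,
    TensorProduct.map str.symm.toLinearMap comul (comul c)
      = TensorProduct.assoc K C C C (TensorProduct.map comul str.symm.toLinearMap (comul c))
  comul_str : ∀ c : C, comul (str c) = TensorProduct.map str.toLinearMap str.toLinearMap (comul c)
  counit_comul_left : ∀ c : C,
    TensorProduct.lid K C (TensorProduct.map counit (LinearMap.id : C →ₗ[K] C) (comul c)) = str.symm c
  counit_comul_right : ∀ c : C,
    TensorProduct.rid K C (TensorProduct.map (LinearMap.id : C →ₗ[K] C) counit (comul c)) = str.symm c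
  counit_str : ∀ c : C, counit (str c) = counit c

/-- The componentwise multiplication on `N ⊗ N` induced by a bilinear multiplication on `N`. -/
def tensorSquareMul {K N : Type*} [Field K] [AddCommGroup N] [Module K N]
    (mul : N →ₗ[K] N →ₗ[K] N) :
    (N ⊗[K] N) →ₗ[K] (N ⊗[K] N) →ₗ[K] (N ⊗[K] N) :=
  TensorProduct.curry
    ((TensorProduct.map (TensorProduct.lift mul) (TensorProduct.lift mul)) ∘ₗ
      (TensorProduct.tensorTensorTensorComm K N N N N).toLinearMap)

/-- A monoidal Hom-bialgebra `(H, α)`. -/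
structure HomBialgebraStr (K : Type*) (H : Type*) [Field K] [AddCommGroup H] [Module K H]
    extends HomAlgebraStr K H where
  comul : H →ₗ[K] H ⊗[K] H
  counit : H →ₗ[K] K
  hom_coassoc : ∀ c : H,
    TensorProduct.map str.symm.toLinearMap comul (comul c)
      = TensorProduct.assoc K H H H (TensorProduct.map comul str.symm.toLinearMap (comul c))
  comul_str : ∀ c : H, comul (str c) = TensorProduct.map str.toLinearMap str.toLinearMap (comul c)
  counit_comul_left : ∀ c : H,
    TensorProduct.lid K H (TensorProduct.map counit (LinearMap.id : H →ₗ[K] H) (comul c)) = str.symm c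
  counit_comul_right : ∀ c : H,
    TensorProduct.rid K H (TensorProduct.map (LinearMap.id : H →ₗ[K] H) counit (comul c)) = str.symm c
  counit_str : ∀ c : H, counit (str c) = counit c
  comul_mul : ∀ a b : H, comul (mul a b) = tensorSquareMul mul (comul a) (comul b)
  comul_one : comul one = one ⊗ₜ[K] one
  counit_mul : ∀ a b : H, counit (mul a b) = counit a * counit b
  counit_one : counit one = 1

/-- A monoidal Hom-Hopf algebra `(H, α, S)`. -/
structure HomHopfStr (K : Type*) (H : Type*) [Field K] [AddCommGroup H] [Module K H]
    extends HomBialgebraStr K H where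
  antipode : H →ₗ[K] H
  antipode_str : ∀ h : H, antipode (str h) = str (antipode h)
  antipode_mul_left : ∀ h : H,
    TensorProduct.lift (mul ∘ₗ antipode) (comul h) = counit h • one
  antipode_mul_right : ∀ h : H,
    TensorProduct.lift (mul.compl₂ antipode) (comul h) = counit h • one

section Defs

variable {K H A C M : Type*} [Field K]
variable [AddCommGroup H] [Module K H] [AddCommGroup A] [Module K A]
variable [AddCommGroup C] [Module K C] [AddCommGroup M] [Module K M]

/-- `(A, β)` is a left weak `(H, α)`-Hom-module algebra via `act`:
`h·(ab) = (h₁·a)(h₂·b)` and `h·1 = ε(h)1`. -/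
structure IsWeakModuleAlgebra (HB : HomBialgebraStr K H) (AA : HomAlgebraStr K A)
    (act : H →ₗ[K] A →ₗ[K] A) : Prop where
  act_mul : ∀ (h : H) (a b : A),
    act h (AA.mul a b)
      = TensorProduct.lift AA.mul
          (TensorProduct.map (TensorProduct.lift act) (TensorProduct.lift act)
            (TensorProduct.map ((TensorProduct.mk K H A).flip a) ((TensorProduct.mk K H A).flip b)
              (HB.comul h)))
  act_one : ∀ h : H, act h AA.one = HB.counit h • AA.one

/-- `(C, β)` is a left `(H, α)`-Hom-comodule coalgebra via `coact a = a₍₋₁₎ ⊗ a₍₀₎`. -/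
structure IsComoduleCoalgebra (HB : HomBialgebraStr K H) (CC : HomCoalgebraStr K C)
    (coact : C →ₗ[K] H ⊗[K] C) : Prop where
  comodule_coassoc : ∀ c : C,
    TensorProduct.assoc K H H C
        (TensorProduct.map HB.comul CC.str.symm.toLinearMap (coact c))
      = TensorProduct.map HB.str.symm.toLinearMap coact (coact c)
  coact_str : ∀ c : C,
    coact (CC.str c) = TensorProduct.map HB.str.toLinearMap CC.str.toLinearMap (coact c)
  counit_coact : ∀ c : C,
    TensorProduct.lid K C (TensorProduct.map HB.counit (LinearMap.id : C →ₗ[K] C) (coact c))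
      = CC.str.symm c
  coact_comul : ∀ c : C,
    TensorProduct.map (LinearMap.id : H →ₗ[K] H) CC.comul (coact c)
      = TensorProduct.map (TensorProduct.lift HB.mul) (LinearMap.id : C ⊗[K] C →ₗ[K] C ⊗[K] C)
          (TensorProduct.tensorTensorTensorComm K H C H C
            (TensorProduct.map coact coact (CC.comul c)))
  counit_coact_one : ∀ c : C,
    TensorProduct.rid K H (TensorProduct.map (LinearMap.id : H →ₗ[K] H) CC.counit (coact c))
      = CC.counit c • HB.one

/-- The `(m,k)`-Hom-crossed product multiplication on simple tensors:
`(a ♯ h)(b ♯ g) = a[(α^m(h₁₁)·β⁻²(b)) σ(α^{k+1}(h₁₂), α^k(g₁))] ♯ α(h₂g₂)`. -/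
def cpMulElem (HB : HomBialgebraStr K H) (AA : HomAlgebraStr K A)
    (act : H →ₗ[K] A →ₗ[K] A) (σ : H →ₗ[K] H →ₗ[K] A) (m k : ℤ)
    (a : A) (h : H) (b : A) (g : H) : A ⊗[K] H :=
  TensorProduct.map
    ((AA.mul a) ∘ₗ TensorProduct.lift AA.mul ∘ₗ
      TensorProduct.map
        ((act.flip ((AA.str ^ (-2 : ℤ)) b)) ∘ₗ (HB.str ^ m).toLinearMap)
        (TensorProduct.lift σ ∘ₗ
          TensorProduct.map (HB.str ^ (k+1)).toLinearMap (HB.str ^ k).toLinearMap) ∘ₗ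
      (TensorProduct.assoc K H H H).toLinearMap)
    (HB.str.toLinearMap ∘ₗ TensorProduct.lift HB.mul)
    (TensorProduct.map (TensorProduct.map HB.comul (LinearMap.id : H →ₗ[K] H))
      (LinearMap.id : H ⊗[K] H →ₗ[K] H ⊗[K] H)
      (TensorProduct.tensorTensorTensorComm K H H H H (HB.comul h ⊗ₜ[K] HB.comul g)))

/-- The `m`-Hom-smash product multiplication on simple tensors:
`(a ♯ h)(b ♯ g) = a(α^m(h₁)·β⁻¹(b)) ♯ α(h₂)g`. -/
def smashMulElem (HB : HomBialgebraStr K H) (AA : HomAlgebraStr K A)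
    (act : H →ₗ[K] A →ₗ[K] A) (m : ℤ) (a : A) (h : H) (b : A) (g : H) : A ⊗[K] H :=
  TensorProduct.map
    ((AA.mul a) ∘ₗ (act.flip ((AA.str ^ (-1 : ℤ)) b)) ∘ₗ (HB.str ^ m).toLinearMap)
    ((HB.mul.flip g) ∘ₗ HB.str.toLinearMap)
    (HB.comul h)

/-- The `m`-Hom-smash coproduct comultiplication on simple tensors:
`Δ(a ⋊ h) = (a₁ ⋊ α^m(a₂₍₋₁₎)α⁻¹(h₁)) ⊗ (β(a₂₍₀₎) ⋊ h₂)`. -/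
def scComulElem (HB : HomBialgebraStr K H) (AC : HomCoalgebraStr K A)
    (coact : A →ₗ[K] H ⊗[K] A) (m : ℤ) (a : A) (h : H) :
    (A ⊗[K] H) ⊗[K] (A ⊗[K] H) :=
  TensorProduct.map
    (TensorProduct.map (LinearMap.id : A →ₗ[K] A)
        (TensorProduct.lift HB.mul ∘ₗ
          TensorProduct.map (HB.str ^ m).toLinearMap (HB.str ^ (-1 : ℤ)).toLinearMap) ∘ₗ
      (TensorProduct.assoc K A H H).toLinearMap)
    (TensorProduct.map AC.str.toLinearMap (LinearMap.id : H →ₗ[K] H))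
    (TensorProduct.tensorTensorTensorComm K (A ⊗[K] H) A H H
      ((TensorProduct.assoc K A H A).symm
          (TensorProduct.map (LinearMap.id : A →ₗ[K] A) coact (AC.comul a)) ⊗ₜ[K] HB.comul h))

/-- Condition (1) of Theorem 2.3. -/
def CPCond1 (HB : HomBialgebraStr K H) (AA : HomAlgebraStr K A)
    (σ : H →ₗ[K] H →ₗ[K] A) : Prop :=
  (∀ h : H, σ h HB.one = HB.counit h • AA.one) ∧
  (∀ h : H, σ HB.one h = HB.counit h • AA.one) ∧
  (∀ h g : H, σ (HB.str h) (HB.str g) = AA.str (σ h g))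

/-- Condition (2) of Theorem 2.3:
`[α^m(h₁l₁)·a] σ(α^{k+2}(h₂), α^{k+2}(l₂)) = σ(α^{k+2}(h₁), α^{k+2}(l₁)) [α^m(h₂l₂)·a]`. -/
def CPCond2 (HB : HomBialgebraStr K H) (AA : HomAlgebraStr K A)
    (act : H →ₗ[K] A →ₗ[K] A) (σ : H →ₗ[K] H →ₗ[K] A) (m k : ℤ) : Prop :=
  ∀ (h l : H) (a : A),
    TensorProduct.lift AA.mul
      (TensorProduct.map
        ((act.flip a) ∘ₗ (HB.str ^ m).toLinearMap ∘ₗ TensorProduct.lift HB.mul)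
        (TensorProduct.lift σ ∘ₗ
          TensorProduct.map (HB.str ^ (k+2)).toLinearMap (HB.str ^ (k+2)).toLinearMap)
        (TensorProduct.tensorTensorTensorComm K H H H H (HB.comul h ⊗ₜ[K] HB.comul l)))
    =
    TensorProduct.lift AA.mul
      (TensorProduct.map
        (TensorProduct.lift σ ∘ₗ
          TensorProduct.map (HB.str ^ (k+2)).toLinearMap (HB.str ^ (k+2)).toLinearMap)
        ((act.flip a) ∘ₗ (HB.str ^ m).toLinearMap ∘ₗ TensorProduct.lift HB.mul)
        (TensorProduct.tensorTensorTensorComm K H H H H (HB.comul h ⊗ₜ[K] HB.comul l)))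

/-- Condition (3) of Theorem 2.3:
`[α^{m+1}(h₁)·σ(α^{k+1}(l₁), α^{k+1}(g₁))] σ(α^{k+2}(h₂), α^{k+1}(l₂g₂))
  = σ(α^{k+2}(h₁), α^{k+2}(l₁)) σ(α^{k+1}(h₂l₂), α^{k+1}(g))`. -/
def CPCond3 (HB : HomBialgebraStr K H) (AA : HomAlgebraStr K A)
    (act : H →ₗ[K] A →ₗ[K] A) (σ : H →ₗ[K] H →ₗ[K] A) (m k : ℤ) : Prop :=
  ∀ h l g : H,
    TensorProduct.lift AA.mul
      (TensorProduct.map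
        (TensorProduct.lift act ∘ₗ
          TensorProduct.map (HB.str ^ (m+1)).toLinearMap
            (TensorProduct.lift σ ∘ₗ
              TensorProduct.map (HB.str ^ (k+1)).toLinearMap (HB.str ^ (k+1)).toLinearMap))
        (TensorProduct.lift σ ∘ₗ
          TensorProduct.map (HB.str ^ (k+2)).toLinearMap
            ((HB.str ^ (k+1)).toLinearMap ∘ₗ TensorProduct.lift HB.mul))
        (TensorProduct.tensorTensorTensorComm K H H (H ⊗[K] H) (H ⊗[K] H)
          (HB.comul h ⊗ₜ[K]
            (TensorProduct.tensorTensorTensorComm K H H H H (HB.comul l ⊗ₜ[K] HB.comul g)))))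
    =
    TensorProduct.lift AA.mul
      (TensorProduct.map
        (TensorProduct.lift σ ∘ₗ
          TensorProduct.map (HB.str ^ (k+2)).toLinearMap (HB.str ^ (k+2)).toLinearMap)
        ((σ.flip ((HB.str ^ (k+1)) g)) ∘ₗ (HB.str ^ (k+1)).toLinearMap ∘ₗ TensorProduct.lift HB.mul)
        (TensorProduct.tensorTensorTensorComm K H H H H (HB.comul h ⊗ₜ[K] HB.comul l)))

/-- `σ` is a twisted comodule cocycle:
`β(a₁) ⊗ α^{m+1}(a₂₍₋₁₎)g ⊗ a₂₍₀₎
  = a₁σ(α^{k+m+2}(a₂₍₋₁₎₁), α^{k+1}(g₁)) ⊗ α^{m+2}(a₂₍₋₁₎₂)α(g₂) ⊗ a₂₍₀₎`. -/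
def IsTwistedCocycle (HB : HomBialgebraStr K H) (AA : HomAlgebraStr K A)
    (AC : HomCoalgebraStr K A) (coact : A →ₗ[K] H ⊗[K] A)
    (σ : H →ₗ[K] H →ₗ[K] A) (m k : ℤ) : Prop :=
  ∀ (a : A) (g : H),
    (TensorProduct.assoc K A H A).symm
      (TensorProduct.map AA.str.toLinearMap
        (TensorProduct.map ((HB.mul.flip g) ∘ₗ (HB.str ^ (m+1)).toLinearMap)
          (LinearMap.id : A →ₗ[K] A))
        (TensorProduct.map (LinearMap.id : A →ₗ[K] A) coact (AC.comul a)))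
    =
    TensorProduct.map
      (TensorProduct.map (TensorProduct.lift AA.mul) (LinearMap.id : H →ₗ[K] H)
        ∘ₗ (TensorProduct.assoc K A A H).symm.toLinearMap
        ∘ₗ TensorProduct.map (LinearMap.id : A →ₗ[K] A)
            (TensorProduct.map
              (TensorProduct.lift σ ∘ₗ
                TensorProduct.map (HB.str ^ (k+m+2)).toLinearMap (HB.str ^ (k+1)).toLinearMap)
              (TensorProduct.lift HB.mul ∘ₗ
                TensorProduct.map (HB.str ^ (m+2)).toLinearMap HB.str.toLinearMap)
            ∘ₗ (TensorProduct.tensorTensorTensorComm K H H H H).toLinearMap)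
        ∘ₗ (TensorProduct.assoc K A (H ⊗[K] H) (H ⊗[K] H)).toLinearMap)
      (LinearMap.id : A →ₗ[K] A)
      ((TensorProduct.assoc K (A ⊗[K] (H ⊗[K] H)) (H ⊗[K] H) A).symm
        (TensorProduct.map (LinearMap.id : A ⊗[K] (H ⊗[K] H) →ₗ[K] A ⊗[K] (H ⊗[K] H))
          (TensorProduct.comm K A (H ⊗[K] H)).toLinearMap
          (TensorProduct.assoc K (A ⊗[K] (H ⊗[K] H)) A (H ⊗[K] H)
            ((TensorProduct.assoc K A (H ⊗[K] H) A).symm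
                (TensorProduct.map (LinearMap.id : A →ₗ[K] A)
                  (TensorProduct.map HB.comul (LinearMap.id : A →ₗ[K] A))
                  (TensorProduct.map (LinearMap.id : A →ₗ[K] A) coact (AC.comul a)))
              ⊗ₜ[K] HB.comul g))))

/-- Auxiliary map `(n ⊗ w) ⊗ t ↦ (α^j(n)·t) ⊗ f(w)` on `(H ⊗ M) ⊗ H`. -/
def coactMulAux (HB : HomBialgebraStr K H) (j : ℤ) (f : M →ₗ[K] M) :
    (H ⊗[K] M) ⊗[K] H →ₗ[K] H ⊗[K] M :=
  TensorProduct.map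
      (TensorProduct.lift HB.mul ∘ₗ
        TensorProduct.map (HB.str ^ j).toLinearMap (LinearMap.id : H →ₗ[K] H)) f
    ∘ₗ (TensorProduct.assoc K H H M).symm.toLinearMap
    ∘ₗ TensorProduct.map (LinearMap.id : H →ₗ[K] H) (TensorProduct.comm K M H).toLinearMap
    ∘ₗ (TensorProduct.assoc K H M H).toLinearMap

/-- (A1): `ε_A` is an algebra map. -/
def CondA1 (AA : HomAlgebraStr K A) (AC : HomCoalgebraStr K A) : Prop :=
  (∀ a b : A, AC.counit (AA.mul a b) = AC.counit a * AC.counit b) ∧ AC.counit AA.one = 1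

/-- (A2): `ε_A(h·a) = ε_H(h)ε_A(a)`. -/
def CondA2 (HB : HomBialgebraStr K H) (AC : HomCoalgebraStr K A)
    (act : H →ₗ[K] A →ₗ[K] A) : Prop :=
  ∀ (h : H) (a : A), AC.counit (act h a) = HB.counit h * AC.counit a

/-- (A3): `σ` is a coalgebra map. -/
def CondA3 (HB : HomBialgebraStr K H) (AC : HomCoalgebraStr K A)
    (σ : H →ₗ[K] H →ₗ[K] A) : Prop :=
  (∀ h g : H,
    AC.comul (σ h g)
      = TensorProduct.map (TensorProduct.lift σ) (TensorProduct.lift σ)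
          (TensorProduct.tensorTensorTensorComm K H H H H (HB.comul h ⊗ₜ[K] HB.comul g))) ∧
  (∀ h g : H, AC.counit (σ h g) = HB.counit h * HB.counit g)

/-- (A4): `Δ_A(1_A) = 1_A ⊗ 1_A`. -/
def CondA4 (AA : HomAlgebraStr K A) (AC : HomCoalgebraStr K A) : Prop :=
  AC.comul AA.one = AA.one ⊗ₜ[K] AA.one

/-- (A5): the coaction is an algebra map. -/
def CondA5 (HB : HomBialgebraStr K H) (AA : HomAlgebraStr K A)
    (coact : A →ₗ[K] H ⊗[K] A) : Prop :=
  (∀ a b : A,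
    coact (AA.mul a b)
      = TensorProduct.map (TensorProduct.lift HB.mul) (TensorProduct.lift AA.mul)
          (TensorProduct.tensorTensorTensorComm K H A H A (coact a ⊗ₜ[K] coact b))) ∧
  coact AA.one = HB.one ⊗ₜ[K] AA.one

/-- (A6). -/
def CondA6 (HB : HomBialgebraStr K H) (coact : A →ₗ[K] H ⊗[K] A)
    (σ : H →ₗ[K] H →ₗ[K] A) (m k : ℤ) : Prop :=
  ∀ h g : H,
    coactMulAux HB (m-1) (LinearMap.id : A →ₗ[K] A)
      (TensorProduct.map
        (coact ∘ₗ TensorProduct.lift σ ∘ₗ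
          TensorProduct.map (HB.str ^ (k+2)).toLinearMap (HB.str ^ (k+2)).toLinearMap)
        ((HB.str ^ (-1 : ℤ)).toLinearMap ∘ₗ TensorProduct.lift HB.mul)
        (TensorProduct.tensorTensorTensorComm K H H H H (HB.comul h ⊗ₜ[K] HB.comul g)))
    =
    TensorProduct.map (TensorProduct.lift HB.mul)
      (TensorProduct.lift σ ∘ₗ
        TensorProduct.map (HB.str ^ (k+1)).toLinearMap (HB.str ^ (k+1)).toLinearMap)
      (TensorProduct.tensorTensorTensorComm K H H H H (HB.comul h ⊗ₜ[K] HB.comul g))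

/-- (A7). -/
def CondA7 (HB : HomBialgebraStr K H) (AA : HomAlgebraStr K A) (AC : HomCoalgebraStr K A)
    (act : H →ₗ[K] A →ₗ[K] A) (coact : A →ₗ[K] H ⊗[K] A)
    (σ : H →ₗ[K] H →ₗ[K] A) (m k : ℤ) : Prop :=
  ∀ a b : A,
    AC.comul (AA.mul a b) =
      TensorProduct.map
        (TensorProduct.lift AA.mul
          ∘ₗ TensorProduct.map (LinearMap.id : A →ₗ[K] A)
              (TensorProduct.lift AA.mul
                ∘ₗ TensorProduct.map
                    (TensorProduct.lift act ∘ₗ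
                      TensorProduct.map (HB.str ^ (2*m)).toLinearMap (AA.str ^ (-2 : ℤ)).toLinearMap)
                    (TensorProduct.lift σ ∘ₗ
                      TensorProduct.map (HB.str ^ (k+m+1)).toLinearMap (HB.str ^ (k+m)).toLinearMap)
                ∘ₗ (TensorProduct.tensorTensorTensorComm K H H A H).toLinearMap)
          ∘ₗ (TensorProduct.assoc K A (H ⊗[K] H) (A ⊗[K] H)).toLinearMap)
        (AA.str.toLinearMap ∘ₗ TensorProduct.lift AA.mul)
        (TensorProduct.tensorTensorTensorComm K (A ⊗[K] (H ⊗[K] H)) A (A ⊗[K] H) A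
          ((TensorProduct.assoc K A (H ⊗[K] H) A).symm
              (TensorProduct.map (LinearMap.id : A →ₗ[K] A)
                (TensorProduct.map HB.comul (LinearMap.id : A →ₗ[K] A))
                (TensorProduct.map (LinearMap.id : A →ₗ[K] A) coact (AC.comul a)))
            ⊗ₜ[K]
            (TensorProduct.assoc K A H A).symm
              (TensorProduct.map (LinearMap.id : A →ₗ[K] A) coact (AC.comul b))))

/-- (A8). -/
def CondA8 (HB : HomBialgebraStr K H) (AA : HomAlgebraStr K A) (AC : HomCoalgebraStr K A)
    (act : H →ₗ[K] A →ₗ[K] A) (coact : A →ₗ[K] H ⊗[K] A)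
    (σ : H →ₗ[K] H →ₗ[K] A) (m k : ℤ) : Prop :=
  ∀ (h : H) (b : A),
    AC.comul (act ((HB.str ^ m) h) b) =
      TensorProduct.map
        (TensorProduct.lift AA.mul
          ∘ₗ TensorProduct.map
              (TensorProduct.lift act ∘ₗ
                TensorProduct.map (HB.str ^ m).toLinearMap (AA.str ^ (-1 : ℤ)).toLinearMap)
              (TensorProduct.lift σ ∘ₗ
                TensorProduct.map (HB.str ^ (k+1)).toLinearMap (HB.str ^ (k+m+1)).toLinearMap)
          ∘ₗ (TensorProduct.tensorTensorTensorComm K H H A H).toLinearMap)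
        (TensorProduct.lift act ∘ₗ
          TensorProduct.map (HB.str ^ m).toLinearMap AA.str.toLinearMap)
        (TensorProduct.tensorTensorTensorComm K (H ⊗[K] H) H (A ⊗[K] H) A
          (TensorProduct.map HB.comul (LinearMap.id : H →ₗ[K] H) (HB.comul h)
            ⊗ₜ[K]
            (TensorProduct.assoc K A H A).symm
              (TensorProduct.map (LinearMap.id : A →ₗ[K] A) coact (AC.comul b))))

/-- (A9). -/
def CondA9 (HB : HomBialgebraStr K H) (act : H →ₗ[K] A →ₗ[K] A)
    (coact : A →ₗ[K] H ⊗[K] A) (m : ℤ) : Prop :=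
  ∀ (h : H) (b : A),
    coactMulAux HB (m-1) (LinearMap.id : A →ₗ[K] A)
      (TensorProduct.map (coact ∘ₗ (act.flip b) ∘ₗ (HB.str ^ (m+1)).toLinearMap)
        (LinearMap.id : H →ₗ[K] H) (HB.comul h))
    =
    TensorProduct.map
      (TensorProduct.lift HB.mul ∘ₗ
        TensorProduct.map (LinearMap.id : H →ₗ[K] H) (HB.str ^ m).toLinearMap)
      (TensorProduct.lift act ∘ₗ
        TensorProduct.map (HB.str ^ m).toLinearMap (LinearMap.id : A →ₗ[K] A))
      (TensorProduct.tensorTensorTensorComm K H H H A (HB.comul h ⊗ₜ[K] coact b))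

/-- The Radford `[(m,k),m]`-biproduct structure on `A ⊗ H`. -/
structure IsRadfordBiproduct (HB : HomBialgebraStr K H) (AA : HomAlgebraStr K A)
    (AC : HomCoalgebraStr K A) (act : H →ₗ[K] A →ₗ[K] A) (coact : A →ₗ[K] H ⊗[K] A)
    (σ : H →ₗ[K] H →ₗ[K] A) (m k : ℤ) (B : HomBialgebraStr K (A ⊗[K] H)) : Prop where
  mul_def : ∀ (a : A) (h : H) (b : A) (g : H),
    B.mul (a ⊗ₜ[K] h) (b ⊗ₜ[K] g) = cpMulElem HB AA act σ m k a h b g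
  one_def : B.one = AA.one ⊗ₜ[K] HB.one
  comul_def : ∀ (a : A) (h : H), B.comul (a ⊗ₜ[K] h) = scComulElem HB AC coact m a h
  counit_def : ∀ (a : A) (h : H), B.counit (a ⊗ₜ[K] h) = AC.counit a * HB.counit h
  str_def : B.str = TensorProduct.congr AA.str HB.str

/-- `S_H` is a `σ`-antipode for `(H, α)`. -/
structure IsSigmaAntipode (HB : HomBialgebraStr K H) (AA : HomAlgebraStr K A)
    (σ : H →ₗ[K] H →ₗ[K] A) (S : H →ₗ[K] H) : Prop where
  antipode_str : ∀ h : H, S (HB.str h) = HB.str (S h)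
  right : ∀ h : H,
    TensorProduct.map (TensorProduct.lift σ) (TensorProduct.lift HB.mul)
        (TensorProduct.tensorTensorTensorComm K H H H H
          (TensorProduct.map HB.comul (HB.comul ∘ₗ S) (HB.comul h)))
      = HB.counit h • (AA.one ⊗ₜ[K] HB.one)
  left : ∀ h : H,
    TensorProduct.map (TensorProduct.lift σ) (TensorProduct.lift HB.mul)
        (TensorProduct.tensorTensorTensorComm K H H H H
          (TensorProduct.map (HB.comul ∘ₗ S) HB.comul (HB.comul h)))
      = HB.counit h • (AA.one ⊗ₜ[K] HB.one)

/-- `S_A` is a convolution inverse of `id_A`. -/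
def IsConvInvOfId (AA : HomAlgebraStr K A) (AC : HomCoalgebraStr K A)
    (SA : A →ₗ[K] A) : Prop :=
  (∀ a : A, TensorProduct.lift (AA.mul ∘ₗ SA) (AC.comul a) = AC.counit a • AA.one) ∧
  (∀ a : A, TensorProduct.lift (AA.mul.compl₂ SA) (AC.comul a) = AC.counit a • AA.one)

/-- `σ` and `σinv` are convolution inverses of each other. -/
def IsConvInvPair (HB : HomBialgebraStr K H) (AA : HomAlgebraStr K A)
    (σ σinv : H →ₗ[K] H →ₗ[K] A) : Prop :=
  (∀ h g : H,
    TensorProduct.lift AA.mul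
      (TensorProduct.map (TensorProduct.lift σ) (TensorProduct.lift σinv)
        (TensorProduct.tensorTensorTensorComm K H H H H (HB.comul h ⊗ₜ[K] HB.comul g)))
    = (HB.counit h * HB.counit g) • AA.one) ∧
  (∀ h g : H,
    TensorProduct.lift AA.mul
      (TensorProduct.map (TensorProduct.lift σinv) (TensorProduct.lift σ)
        (TensorProduct.tensorTensorTensorComm K H H H H (HB.comul h ⊗ₜ[K] HB.comul g)))
    = (HB.counit h * HB.counit g) • AA.one)

/-- The Radford antipode formula
`S(a ⊗ h) = (1_A ⊗ S_H(α^{m−1}(a₍₋₁₎)α⁻²(h)))·(S_A(a₍₀₎) ⊗ 1_H)`. -/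
def radfordAntipodeElem (HB : HomBialgebraStr K H) (AA : HomAlgebraStr K A)
    (coact : A →ₗ[K] H ⊗[K] A)
    (Bmul : (A ⊗[K] H) →ₗ[K] (A ⊗[K] H) →ₗ[K] (A ⊗[K] H))
    (SH : H →ₗ[K] H) (SA : A →ₗ[K] A) (m : ℤ) (a : A) (h : H) : A ⊗[K] H :=
  TensorProduct.lift Bmul
    (TensorProduct.map
      ((TensorProduct.mk K A H AA.one) ∘ₗ SH ∘ₗ (HB.mul.flip ((HB.str ^ (-2 : ℤ)) h)) ∘ₗ
        (HB.str ^ (m - 1)).toLinearMap)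
      (((TensorProduct.mk K A H).flip HB.one) ∘ₗ SA)
      (coact a))

/-- `φ^l(l ⊗ (a ⊗ h)) = (α(l₁₁)·β⁻¹(a)) σ(α^{k+2−m}(l₁₂), α^{k+1}(h₁)) ⊗ α^{1−m}(l₂)α(h₂)`. -/
def philElem (HB : HomBialgebraStr K H) (AA : HomAlgebraStr K A)
    (act : H →ₗ[K] A →ₗ[K] A) (σ : H →ₗ[K] H →ₗ[K] A) (m k : ℤ)
    (l : H) (a : A) (h : H) : A ⊗[K] H :=
  TensorProduct.map
    (TensorProduct.lift AA.mul ∘ₗ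
      TensorProduct.map ((act.flip ((AA.str ^ (-1 : ℤ)) a)) ∘ₗ HB.str.toLinearMap)
        (TensorProduct.lift σ ∘ₗ
          TensorProduct.map (HB.str ^ (k+2-m)).toLinearMap (HB.str ^ (k+1)).toLinearMap) ∘ₗ
      (TensorProduct.assoc K H H H).toLinearMap)
    (TensorProduct.lift HB.mul ∘ₗ
      TensorProduct.map (HB.str ^ (1-m)).toLinearMap HB.str.toLinearMap)
    (TensorProduct.map (TensorProduct.map HB.comul (LinearMap.id : H →ₗ[K] H))
      (LinearMap.id : H ⊗[K] H →ₗ[K] H ⊗[K] H)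
      (TensorProduct.tensorTensorTensorComm K H H H H (HB.comul l ⊗ₜ[K] HB.comul h)))

/-- `φ^r((a ⊗ h) ⊗ l) = a σ(α^{k+1}(h₁), α^{k+1−m}(l₁)) ⊗ α(h₂)α^{1−m}(l₂)`. -/
def phirElem (HB : HomBialgebraStr K H) (AA : HomAlgebraStr K A)
    (σ : H →ₗ[K] H →ₗ[K] A) (m k : ℤ) (a : A) (h : H) (l : H) : A ⊗[K] H :=
  TensorProduct.map
    ((AA.mul a) ∘ₗ TensorProduct.lift σ ∘ₗ
      TensorProduct.map (HB.str ^ (k+1)).toLinearMap (HB.str ^ (k+1-m)).toLinearMap)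
    (TensorProduct.lift HB.mul ∘ₗ
      TensorProduct.map HB.str.toLinearMap (HB.str ^ (1-m)).toLinearMap)
    (TensorProduct.tensorTensorTensorComm K H H H H (HB.comul h ⊗ₜ[K] HB.comul l))

/-- `(M, μ, φ)` is a left `(H, α, σ̄)`-Hom module. -/
def IsLeftSigmaHomModule (HB : HomBialgebraStr K H)
    (mulM : M →ₗ[K] M →ₗ[K] M) (strM : M →ₗ[K] M)
    (σbar : H →ₗ[K] H →ₗ[K] M) (φ : H →ₗ[K] M →ₗ[K] M) : Prop :=
  (∀ (g l : H) (x : M),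
    φ (HB.str g) (φ l x)
      = TensorProduct.lift mulM
          (TensorProduct.map (strM ∘ₗ TensorProduct.lift σbar)
            ((φ.flip x) ∘ₗ TensorProduct.lift HB.mul)
            (TensorProduct.tensorTensorTensorComm K H H H H (HB.comul g ⊗ₜ[K] HB.comul l))))
  ∧ (∀ x : M, φ HB.one x = strM x)

/-- `(M, μ, φ)` is a right `(H, α, σ̄)`-Hom module. -/
def IsRightSigmaHomModule (HB : HomBialgebraStr K H)
    (mulM : M →ₗ[K] M →ₗ[K] M) (strM : M →ₗ[K] M)
    (σbar : H →ₗ[K] H →ₗ[K] M) (φ : M →ₗ[K] H →ₗ[K] M) : Prop :=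
  (∀ (x : M) (l g : H),
    φ (φ x l) (HB.str g)
      = mulM (strM x)
          (TensorProduct.lift φ
            (TensorProduct.map (TensorProduct.lift σbar) (TensorProduct.lift HB.mul)
              (TensorProduct.tensorTensorTensorComm K H H H H (HB.comul l ⊗ₜ[K] HB.comul g)))))
  ∧ (∀ x : M, φ x HB.one = strM x)

/-- `(M, μ, φ⁺, φ⁻)` is a weak `(H, α)` Hom-bimodule. -/
def IsWeakHomBimodule (HB : HomBialgebraStr K H) (strM : M →ₗ[K] M)
    (φl : H →ₗ[K] M →ₗ[K] M) (φr : M →ₗ[K] H →ₗ[K] M) : Prop :=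
  (∀ x : M, φl HB.one x = strM x) ∧ (∀ x : M, φr x HB.one = strM x) ∧
  (∀ (h : H) (x : M) (g : H), φl (HB.str h) (φr x g) = φr (φl h x) (HB.str g))

/-- A weak `m`-Hom admissible mapping system `C ⇄ A ⇄ H`. -/
structure WeakAdmissibleSystem (HB : HomBialgebraStr K H)
    (CA : HomAlgebraStr K C) (CC : HomCoalgebraStr K C)
    (coact : C →ₗ[K] H ⊗[K] C) (m : ℤ) (AB : HomBialgebraStr K A)
    (j : C →ₗ[K] A) (p : A →ₗ[K] C) (i : H →ₗ[K] A) (π : A →ₗ[K] H) : Prop where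
  c_str_eq : CA.str = CC.str
  p_j : ∀ c : C, p (j c) = c
  pi_i : ∀ h : H, π (i h) = h
  pi_mul : ∀ a b : A, π (AB.mul a b) = HB.mul (π a) (π b)
  pi_one : π AB.one = HB.one
  pi_str : ∀ a : A, π (AB.str a) = HB.str (π a)
  pi_comul : ∀ a : A, TensorProduct.map π π (AB.comul a) = HB.comul (π a)
  pi_counit : ∀ a : A, HB.counit (π a) = AB.counit a
  i_one : i HB.one = AB.one
  i_str : ∀ h : H, i (HB.str h) = AB.str (i h)
  i_comul : ∀ h : H, TensorProduct.map i i (HB.comul h) = AB.comul (i h)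
  i_counit : ∀ h : H, AB.counit (i h) = HB.counit h
  p_str : ∀ a : A, p (AB.str a) = CC.str (p a)
  p_comul : ∀ a : A, TensorProduct.map p p (AB.comul a) = CC.comul (p a)
  p_counit : ∀ a : A, CC.counit (p a) = AB.counit a
  j_mul : ∀ c d : C, j (CA.mul c d) = AB.mul (j c) (j d)
  j_one : j CA.one = AB.one
  j_str : ∀ c : C, j (CC.str c) = AB.str (j c)
  p_left_act : ∀ (h : H) (a : A),
    p (AB.mul (i ((HB.str ^ (-m)) h)) a) = HB.counit h • CC.str (p a)
  p_right_act : ∀ (a : A) (h : H),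
    p (AB.mul a (i ((HB.str ^ (-m)) h))) = HB.counit h • CC.str (p a)
  sigma_mod : ∃ σbar : H →ₗ[K] H →ₗ[K] A,
    IsLeftSigmaHomModule HB AB.mul AB.str.toLinearMap σbar
        (AB.mul ∘ₗ i ∘ₗ (HB.str ^ (-m)).toLinearMap)
      ∧ IsRightSigmaHomModule HB AB.mul AB.str.toLinearMap σbar
        (AB.mul.compl₂ (i ∘ₗ (HB.str ^ (-m)).toLinearMap))
  sub_l : ∀ c : C, ∃ y : H ⊗[K] C,
    TensorProduct.map ((HB.str ^ (-m)).toLinearMap ∘ₗ π) (LinearMap.id : A →ₗ[K] A)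
        (AB.comul (j c))
      = TensorProduct.map (LinearMap.id : H →ₗ[K] H) j y
  sub_r : ∀ c : C, ∃ z : C ⊗[K] H,
    TensorProduct.map (LinearMap.id : A →ₗ[K] A) ((HB.str ^ (-m)).toLinearMap ∘ₗ π)
        (AB.comul (j c))
      = TensorProduct.map j (LinearMap.id : H →ₗ[K] H) z
  p_col : ∀ c : C,
    TensorProduct.map (LinearMap.id : H →ₗ[K] H) p
        (TensorProduct.map ((HB.str ^ (-m)).toLinearMap ∘ₗ π) (LinearMap.id : A →ₗ[K] A)
          (AB.comul (j c)))
      = coact c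
  p_cor : ∀ c : C,
    TensorProduct.map p (LinearMap.id : H →ₗ[K] H)
        (TensorProduct.map (LinearMap.id : A →ₗ[K] A) ((HB.str ^ (-m)).toLinearMap ∘ₗ π)
          (AB.comul (j c)))
      = CC.str.symm c ⊗ₜ[K] HB.one
  split : ∀ a : A,
    TensorProduct.lift AB.mul (TensorProduct.map (j ∘ₗ p) (i ∘ₗ π) (AB.comul a)) = a

/-- The map `f : C ♯ H → A`, `c ⊗ h ↦ γ⁻¹(j(c)i(h))`. -/
def admF (AB : HomBialgebraStr K A) (j : C →ₗ[K] A) (i : H →ₗ[K] A) :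
    C ⊗[K] H →ₗ[K] A :=
  AB.str.symm.toLinearMap ∘ₗ TensorProduct.lift ((AB.mul ∘ₗ j).compl₂ i)

/-- The map `g : A → C ♯ H`, `a ↦ β(p(a₁)) ⊗ α(π(a₂))`. -/
def admG (HB : HomBialgebraStr K H) (CC : HomCoalgebraStr K C)
    (AB : HomBialgebraStr K A) (p : A →ₗ[K] C) (π : A →ₗ[K] H) :
    A →ₗ[K] C ⊗[K] H :=
  TensorProduct.map (CC.str.toLinearMap ∘ₗ p) (HB.str.toLinearMap ∘ₗ π) ∘ₗ AB.comul

end Defs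

section AuxProofs

variable {K : Type*} [Field K] {M N : Type*} [AddCommGroup M] [Module K M] [AddCommGroup N] [Module K N]

lemma epow_epow (e : M ≃ₗ[K] M) (a b : ℤ) (x : M) : (e ^ a) ((e ^ b) x) = (e ^ (a + b)) x := by
  rw [zpow_add]; rfl

lemma epow_str (e : M ≃ₗ[K] M) (n : ℤ) (x : M) : (e ^ n) (e x) = (e ^ (n + 1)) x := by
  rw [show e x = (e ^ (1:ℤ)) x by simp, epow_epow]

lemma str_epow (e : M ≃ₗ[K] M) (n : ℤ) (x : M) : e ((e ^ n) x) = (e ^ (n + 1)) x := by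
  rw [show ∀ y, e y = (e ^ (1:ℤ)) y from fun y => by simp, epow_epow, add_comm]

lemma esymm_pow (e : M ≃ₗ[K] M) (x : M) : e.symm x = (e ^ (-1:ℤ)) x := by
  simp [zpow_neg]

lemma epow_symm (e : M ≃ₗ[K] M) (n : ℤ) (x : M) : (e ^ n) (e.symm x) = (e ^ (n - 1)) x := by
  rw [esymm_pow, epow_epow]; ring_nf

lemma symm_epow (e : M ≃ₗ[K] M) (n : ℤ) (x : M) : e.symm ((e ^ n) x) = (e ^ (n - 1)) x := by
  rw [esymm_pow, epow_epow]; ring_nf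

lemma epow_two (e : M ≃ₗ[K] M) (x : M) : e (e x) = (e ^ (2:ℤ)) x := by
  rw [show e x = (e ^ (1:ℤ)) x by simp, str_epow]; norm_num

lemma epow_cancel (e : M ≃ₗ[K] M) (n : ℤ) (x : M) : (e ^ (-n)) ((e ^ n) x) = x := by
  rw [epow_epow]; simp

lemma epow_cancel' (e : M ≃ₗ[K] M) (n : ℤ) (x : M) : (e ^ n) ((e ^ (-n)) x) = x := by
  rw [epow_epow]; simp

lemma epow_inv_cancel (e : M ≃ₗ[K] M) (n : ℤ) (x : M) : (e ^ n) ((e ^ n)⁻¹ x) = x := by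
  rw [← zpow_neg]; exact epow_cancel' e n x

lemma fix_of_pow (e : M ≃ₗ[K] M) {x : M} (hx : e x = x) : ∀ n : ℤ, (e ^ n) x = x := by
  have hsx : e.symm x = x := by conv_lhs => rw [← hx, e.symm_apply_apply]
  intro n
  induction n using Int.induction_on with
  | zero => rfl
  | succ k ih => rw [← epow_str, hx, ih]
  | pred k ih => rw [show (-(k:ℤ) - 1) = (-(k:ℤ)) - 1 from rfl, ← epow_symm, hsx, ih]

lemma invfun_of_pow (e : M ≃ₗ[K] M) (f : M →ₗ[K] N) (hf : ∀ x, f (e x) = f x) :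
    ∀ (n : ℤ) (x : M), f ((e ^ n) x) = f x := by
  have hsymm : ∀ x, f (e.symm x) = f x := fun x => by
    conv_rhs => rw [← e.apply_symm_apply x, hf]
  intro n
  induction n using Int.induction_on with
  | zero => intro x; rfl
  | succ k ih => intro x; rw [← epow_str, ih, hf]
  | pred k ih => intro x; rw [show (-(k:ℤ) - 1) = (-(k:ℤ)) - 1 from rfl, ← epow_symm, ih, hsymm]

lemma map_map_apply {P Q R S : Type*} [AddCommGroup P] [Module K P] [AddCommGroup Q] [Module K Q]
    [AddCommGroup R] [Module K R] [AddCommGroup S] [Module K S]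
    (f₂ : P →ₗ[K] R) (f₁ : M →ₗ[K] P) (g₂ : Q →ₗ[K] S) (g₁ : N →ₗ[K] Q) (x : M ⊗[K] N) :
    map f₂ g₂ (map f₁ g₁ x) = map (f₂ ∘ₗ f₁) (g₂ ∘ₗ g₁) x := by
  rw [TensorProduct.map_comp]; rfl


section AuxDefs

variable {K C H A : Type*} [Field K] [AddCommGroup C] [Module K C] [AddCommGroup H] [Module K H]
  [AddCommGroup A] [Module K A]

/-- `(u ⊗ v) ⊗ h ↦ (u ⊗ h) ⊗ v`. -/
def shuffleHC : (H ⊗[K] C) ⊗[K] H →ₗ[K] (H ⊗[K] H) ⊗[K] C :=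
  (TensorProduct.assoc K H H C).symm.toLinearMap
    ∘ₗ TensorProduct.map (LinearMap.id : H →ₗ[K] H) (TensorProduct.comm K C H).toLinearMap
    ∘ₗ (TensorProduct.assoc K H C H).toLinearMap

lemma shuffleHC_tmul (u : H) (v : C) (h : H) :
    (shuffleHC (K := K)) ((u ⊗ₜ[K] v) ⊗ₜ[K] h) = (u ⊗ₜ[K] h) ⊗ₜ[K] v := by
  simp [shuffleHC]

/-- `(u ⊗ v) ⊗ h ↦ F(u ⊗ h) ⊗ β²(v)`. -/
def pureGen (CC : HomCoalgebraStr K C) (F : H ⊗[K] H →ₗ[K] H) :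
    (H ⊗[K] C) ⊗[K] H →ₗ[K] H ⊗[K] C :=
  TensorProduct.map F (CC.str ^ (2:ℤ)).toLinearMap ∘ₗ shuffleHC

lemma pureGen_tmul (CC : HomCoalgebraStr K C) (F : H ⊗[K] H →ₗ[K] H) (u : H) (v : C) (h : H) :
    pureGen CC F ((u ⊗ₜ[K] v) ⊗ₜ[K] h) = F (u ⊗ₜ[K] h) ⊗ₜ[K] (CC.str ^ (2:ℤ)) v := by
  simp [pureGen, shuffleHC]

/-- `(u ⊗ v) ⊗ h ↦ (α^{m+1}(u)·h) ⊗ β²(v)`. -/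
def pureM (HB : HomBialgebraStr K H) (CC : HomCoalgebraStr K C) (m : ℤ) :
    (H ⊗[K] C) ⊗[K] H →ₗ[K] H ⊗[K] C :=
  pureGen CC (TensorProduct.lift HB.mul
    ∘ₗ TensorProduct.map (HB.str ^ (m+1)).toLinearMap (LinearMap.id : H →ₗ[K] H))

lemma pureM_tmul (HB : HomBialgebraStr K H) (CC : HomCoalgebraStr K C) (m : ℤ)
    (u : H) (v : C) (h : H) :
    pureM HB CC m ((u ⊗ₜ[K] v) ⊗ₜ[K] h)
      = HB.mul ((HB.str ^ (m+1)) u) h ⊗ₜ[K] (CC.str ^ (2:ℤ)) v := by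
  simp [pureM, pureGen_tmul]

/-- Linear-map form of the smash coproduct. -/
def lscMap (HB : HomBialgebraStr K H) (CC : HomCoalgebraStr K C)
    (coact : C →ₗ[K] H ⊗[K] C) (m : ℤ) :
    C ⊗[K] H →ₗ[K] (C ⊗[K] H) ⊗[K] (C ⊗[K] H) :=
  TensorProduct.map
    (TensorProduct.map (LinearMap.id : C →ₗ[K] C)
        (TensorProduct.lift HB.mul ∘ₗ
          TensorProduct.map (HB.str ^ m).toLinearMap (HB.str ^ (-1 : ℤ)).toLinearMap) ∘ₗ
      (TensorProduct.assoc K C H H).toLinearMap)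
    (TensorProduct.map CC.str.toLinearMap (LinearMap.id : H →ₗ[K] H))
  ∘ₗ (TensorProduct.tensorTensorTensorComm K (C ⊗[K] H) C H H).toLinearMap
  ∘ₗ TensorProduct.map
      ((TensorProduct.assoc K C H C).symm.toLinearMap
        ∘ₗ TensorProduct.map (LinearMap.id : C →ₗ[K] C) coact ∘ₗ CC.comul)
      HB.comul

lemma lscMap_tmul (HB : HomBialgebraStr K H) (CC : HomCoalgebraStr K C)
    (coact : C →ₗ[K] H ⊗[K] C) (m : ℤ) (c : C) (h : H) :
    lscMap HB CC coact m (c ⊗ₜ[K] h) = scComulElem HB CC coact m c h := by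
  simp [lscMap, scComulElem]

/-- `(x₁ ⊗ x₂) ⊗ (y₁ ⊗ y₂) ↦ (x₁ ⊗ (x₂ ⊗ y₁)) ⊗ y₂`. -/
def rearrMap : (A ⊗[K] A) ⊗[K] (A ⊗[K] A) →ₗ[K] (A ⊗[K] (A ⊗[K] A)) ⊗[K] A :=
  (TensorProduct.assoc K A (A ⊗[K] A) A).symm.toLinearMap
    ∘ₗ TensorProduct.map (LinearMap.id : A →ₗ[K] A) (TensorProduct.assoc K A A A).symm.toLinearMap
    ∘ₗ (TensorProduct.assoc K A A (A ⊗[K] A)).toLinearMap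

lemma rearrMap_tmul (x₁ x₂ y₁ y₂ : A) :
    (rearrMap (K := K)) ((x₁ ⊗ₜ[K] x₂) ⊗ₜ[K] (y₁ ⊗ₜ[K] y₂))
      = (x₁ ⊗ₜ[K] (x₂ ⊗ₜ[K] y₁)) ⊗ₜ[K] y₂ := by
  simp [rearrMap]

/-- `(x ⊗ w) ⊗ y ↦ rearranged (βp(x) ⊗ M(w) ⊗ απ(y))`. -/
def thetaMap (HB : HomBialgebraStr K H) (CC : HomCoalgebraStr K C)
    (p : A →ₗ[K] C) (π : A →ₗ[K] H) (M : A ⊗[K] A →ₗ[K] H ⊗[K] C) :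
    (A ⊗[K] (A ⊗[K] A)) ⊗[K] A →ₗ[K] (C ⊗[K] H) ⊗[K] (C ⊗[K] H) :=
  (TensorProduct.assoc K C H (C ⊗[K] H)).symm.toLinearMap
    ∘ₗ TensorProduct.map (LinearMap.id : C →ₗ[K] C) (TensorProduct.assoc K H C H).toLinearMap
    ∘ₗ (TensorProduct.assoc K C (H ⊗[K] C) H).toLinearMap
    ∘ₗ TensorProduct.map
        (TensorProduct.map (CC.str.toLinearMap ∘ₗ p) M) (HB.str.toLinearMap ∘ₗ π)

end AuxDefs

end AuxProofs

set_option maxHeartbeats 4000000 in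
/-- In the proof of Theorem 4.11: `g` is a homomorphism of monoidal Hom-coalgebras. -/
theorem admissible_system_g_coalgebra_map
    {K C H A : Type*} [Field K] [AddCommGroup C] [Module K C] [AddCommGroup H] [Module K H]
    [AddCommGroup A] [Module K A]
    (HB : HomBialgebraStr K H) (CA : HomAlgebraStr K C) (CC : HomCoalgebraStr K C)
    (act : H →ₗ[K] C →ₗ[K] C) (hact : IsWeakModuleAlgebra HB CA act)
    (coact : C →ₗ[K] H ⊗[K] C) (hcc : IsComoduleCoalgebra HB CC coact)
    (σ : H →ₗ[K] H →ₗ[K] C) (m k : ℤ)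
    (B : HomBialgebraStr K (C ⊗[K] H))
    (hB : IsRadfordBiproduct HB CA CC act coact σ m k B)
    (AB : HomBialgebraStr K A)
    (j : C →ₗ[K] A) (p : A →ₗ[K] C) (i : H →ₗ[K] A) (π : A →ₗ[K] H)
    (sys : WeakAdmissibleSystem HB CA CC coact m AB j p i π) :
    (∀ a : A,
      B.comul (admG HB CC AB p π a)
        = TensorProduct.map (admG HB CC AB p π) (admG HB CC AB p π) (AB.comul a))
    ∧ (∀ a : A, B.counit (admG HB CC AB p π a) = AB.counit a)
    ∧ (∀ a : A,
      admG HB CC AB p π (AB.str a)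
        = TensorProduct.map CC.str.toLinearMap HB.str.toLinearMap (admG HB CC AB p π a)) := by
  classical
  have hadmG : admG HB CC AB p π
      = TensorProduct.map (CC.str.toLinearMap ∘ₗ p) (HB.str.toLinearMap ∘ₗ π) ∘ₗ AB.comul := rfl
  -- power helpers
  have hpow_one : ∀ n : ℤ, (HB.str ^ n) HB.one = HB.one := fix_of_pow HB.str HB.str_one
  have hcounit_pow : ∀ (n : ℤ) (h : H), HB.counit ((HB.str ^ n) h) = HB.counit h := by
    intro n h; exact invfun_of_pow HB.str HB.counit HB.counit_str n h
  -- basic pointwise facts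
  have hps : ∀ (s : A) (h : H), p (AB.mul s (i h)) = HB.counit h • CC.str (p s) := by
    intro s h
    have h0 := sys.p_right_act s ((HB.str ^ m) h)
    rwa [epow_cancel, hcounit_pow] at h0
  have hπμ : ∀ (t : A) (h' : H), π (AB.mul t (i h')) = HB.mul (π t) h' := by
    intro t h'; rw [sys.pi_mul, sys.pi_i]
  -- p_col map form
  have hcol : ∀ c : C, TensorProduct.map π p (AB.comul (j c))
      = TensorProduct.map (HB.str ^ m).toLinearMap (LinearMap.id : C →ₗ[K] C) (coact c) := by
    intro c
    have h0 := sys.p_col c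
    have e1 : TensorProduct.map π p (AB.comul (j c))
        = TensorProduct.map (HB.str ^ m).toLinearMap (LinearMap.id : C →ₗ[K] C)
            (TensorProduct.map (LinearMap.id : H →ₗ[K] H) p
              (TensorProduct.map ((HB.str ^ (-m)).toLinearMap ∘ₗ π) (LinearMap.id : A →ₗ[K] A)
                (AB.comul (j c)))) := by
      rw [map_map_apply, map_map_apply]
      congr 1 <;> try rfl
      all_goals ext w
      all_goals simp [epow_cancel', epow_inv_cancel]
    rw [e1, h0]
  -- comul of product, map form
  have hL1 : AB.comul ∘ₗ TensorProduct.lift AB.mul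
      = TensorProduct.lift (tensorSquareMul AB.mul) ∘ₗ TensorProduct.map AB.comul AB.comul := by
    apply TensorProduct.ext'
    intro x y
    simp only [LinearMap.comp_apply, TensorProduct.lift.tmul, TensorProduct.map_tmul]
    exact AB.comul_mul x y
  have hfull : ∀ b : A, AB.comul b
      = TensorProduct.lift (tensorSquareMul AB.mul)
          (TensorProduct.map (AB.comul ∘ₗ (j ∘ₗ p))
            ((TensorProduct.map i i) ∘ₗ (HB.comul ∘ₗ π)) (AB.comul b)) := by
    intro b
    conv_lhs => rw [← sys.split b]
    have h1 : AB.comul (TensorProduct.lift AB.mul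
          (TensorProduct.map (j ∘ₗ p) (i ∘ₗ π) (AB.comul b)))
        = TensorProduct.lift (tensorSquareMul AB.mul)
            (TensorProduct.map AB.comul AB.comul
              (TensorProduct.map (j ∘ₗ p) (i ∘ₗ π) (AB.comul b))) :=
      DFunLike.congr_fun hL1 _
    rw [h1, map_map_apply]
    have h2 : AB.comul ∘ₗ (i ∘ₗ π) = (TensorProduct.map i i) ∘ₗ (HB.comul ∘ₗ π) := by
      ext a; simp [← sys.i_comul]
    rw [h2]
  -- the 4-slot computation for M₂
  have hN2 : ∀ (X : A ⊗[K] A) (Y : H ⊗[K] H),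
      TensorProduct.map (HB.str.toLinearMap ∘ₗ π) (CC.str.toLinearMap ∘ₗ p)
          (TensorProduct.lift (tensorSquareMul AB.mul) (X ⊗ₜ[K] TensorProduct.map i i Y))
      = pureGen CC (HB.str.toLinearMap ∘ₗ TensorProduct.lift HB.mul)
          (TensorProduct.map (LinearMap.id : (H ⊗[K] C) →ₗ[K] (H ⊗[K] C))
            (TensorProduct.rid K H).toLinearMap
            (TensorProduct.map (TensorProduct.map π p)
              (TensorProduct.map (LinearMap.id : H →ₗ[K] H) HB.counit) (X ⊗ₜ[K] Y))) := by
    intro X Y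
    induction X using TensorProduct.induction_on with
    | zero => simp
    | add X1 X2 ih1 ih2 => simp only [add_tmul, map_add, ih1, ih2]
    | tmul s t =>
      induction Y using TensorProduct.induction_on with
      | zero => simp
      | add Y1 Y2 ih1 ih2 => simp only [tmul_add, map_add, ih1, ih2]
      | tmul h h' =>
        simp only [TensorProduct.map_tmul, tensorSquareMul, TensorProduct.curry_apply,
          LinearMap.comp_apply, LinearEquiv.coe_coe, TensorProduct.tensorTensorTensorComm_tmul,
          TensorProduct.lift.tmul, LinearMap.id_coe, id_eq, TensorProduct.rid_tmul]
        rw [hπμ s h, hps t h']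
        simp only [map_smul, TensorProduct.tmul_smul, TensorProduct.smul_tmul',
          pureGen_tmul, TensorProduct.lift.tmul, LinearMap.comp_apply, LinearEquiv.coe_coe,
          epow_two, LinearMap.smul_apply]
  have hfin : ∀ (W : H ⊗[K] C) (h : H),
      pureGen CC (HB.str.toLinearMap ∘ₗ TensorProduct.lift HB.mul)
          ((TensorProduct.map (HB.str ^ m).toLinearMap (LinearMap.id : C →ₗ[K] C) W)
            ⊗ₜ[K] HB.str.symm h)
        = pureM HB CC m (W ⊗ₜ[K] h) := by
    intro W h
    induction W using TensorProduct.induction_on with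
    | zero => simp
    | tmul u v =>
      simp only [TensorProduct.map_tmul, pureGen_tmul, pureM_tmul, LinearMap.comp_apply,
        TensorProduct.lift.tmul, LinearMap.id_coe, id_eq, LinearEquiv.coe_coe]
      rw [HB.str_mul, str_epow, LinearEquiv.apply_symm_apply]
    | add W1 W2 ih1 ih2 =>
      simp only [map_add, add_tmul] at *
      rw [ih1, ih2]
  have key2 : ∀ x y : A,
      TensorProduct.map (HB.str.toLinearMap ∘ₗ π) (CC.str.toLinearMap ∘ₗ p)
        (TensorProduct.lift (tensorSquareMul AB.mul)
          (TensorProduct.map (AB.comul ∘ₗ (j ∘ₗ p))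
            ((TensorProduct.map i i) ∘ₗ (HB.comul ∘ₗ π)) (x ⊗ₜ[K] y)))
      = pureM HB CC m (TensorProduct.map (coact ∘ₗ p) π (x ⊗ₜ[K] y)) := by
    intro x y
    simp only [TensorProduct.map_tmul, LinearMap.comp_apply]
    rw [hN2 (AB.comul (j (p x))) (HB.comul (π y))]
    simp only [TensorProduct.map_tmul, LinearMap.id_coe, id_eq, LinearEquiv.coe_coe]
    rw [hcol (p x), HB.counit_comul_right (π y)]
    exact hfin (coact (p x)) (π y)
  have hstar : ∀ b : A,
      TensorProduct.map (HB.str.toLinearMap ∘ₗ π) (CC.str.toLinearMap ∘ₗ p) (AB.comul b)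
      = pureM HB CC m (TensorProduct.map (coact ∘ₗ p) π (AB.comul b)) := by
    intro b
    conv_lhs => rw [hfull b]
    have E2 : (TensorProduct.map (HB.str.toLinearMap ∘ₗ π) (CC.str.toLinearMap ∘ₗ p))
        ∘ₗ (TensorProduct.lift (tensorSquareMul AB.mul)
          ∘ₗ TensorProduct.map (AB.comul ∘ₗ (j ∘ₗ p))
              ((TensorProduct.map i i) ∘ₗ (HB.comul ∘ₗ π)))
        = pureM HB CC m ∘ₗ TensorProduct.map (coact ∘ₗ p) π :=
      TensorProduct.ext' key2
    exact DFunLike.congr_fun E2 (AB.comul b)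
  -- Goal 1 machinery
  have hBc : ∀ t : C ⊗[K] H, B.comul t = lscMap HB CC coact m t := by
    intro t
    induction t using TensorProduct.induction_on with
    | zero => simp
    | tmul c h => rw [hB.comul_def, lscMap_tmul]
    | add t1 t2 ih1 ih2 => rw [map_add, map_add, ih1, ih2]
  have hstep2 : ∀ x y : A,
      lscMap HB CC coact m
        (TensorProduct.map (CC.str.toLinearMap ∘ₗ p) (HB.str.toLinearMap ∘ₗ π) (x ⊗ₜ[K] y))
      = TensorProduct.map
          (TensorProduct.map (LinearMap.id : C →ₗ[K] C)
              (TensorProduct.lift HB.mul ∘ₗ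
                TensorProduct.map (HB.str ^ m).toLinearMap (HB.str ^ (-1 : ℤ)).toLinearMap) ∘ₗ
            (TensorProduct.assoc K C H H).toLinearMap)
          (TensorProduct.map CC.str.toLinearMap (LinearMap.id : H →ₗ[K] H))
          ((TensorProduct.tensorTensorTensorComm K (C ⊗[K] H) C H H)
            (((TensorProduct.assoc K C H C).symm
              (TensorProduct.map (CC.str.toLinearMap ∘ₗ p)
                ((TensorProduct.map HB.str.toLinearMap CC.str.toLinearMap) ∘ₗ (coact ∘ₗ p))
                (AB.comul x)))
              ⊗ₜ[K] (TensorProduct.map (HB.str.toLinearMap ∘ₗ π) (HB.str.toLinearMap ∘ₗ π)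
                      (AB.comul y)))) := by
    intro x y
    have hbpΔ : CC.comul (CC.str (p x))
        = TensorProduct.map (CC.str.toLinearMap ∘ₗ p) (CC.str.toLinearMap ∘ₗ p) (AB.comul x) := by
      rw [CC.comul_str, ← sys.p_comul, map_map_apply]
    have haπΔ : HB.comul (HB.str (π y))
        = TensorProduct.map (HB.str.toLinearMap ∘ₗ π) (HB.str.toLinearMap ∘ₗ π) (AB.comul y) := by
      rw [HB.comul_str, ← sys.pi_comul, map_map_apply]
    have lgc : coact ∘ₗ (CC.str.toLinearMap ∘ₗ p)
        = (TensorProduct.map HB.str.toLinearMap CC.str.toLinearMap) ∘ₗ (coact ∘ₗ p) := by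
      ext w; simp [hcc.coact_str]
    simp only [lscMap, LinearMap.comp_apply, TensorProduct.map_tmul, LinearEquiv.coe_coe]
    rw [hbpΔ, haπΔ, map_map_apply, lgc, LinearMap.id_comp]
  have hPsiTheta : ∀ (X Y : A ⊗[K] A),
      TensorProduct.map
          (TensorProduct.map (LinearMap.id : C →ₗ[K] C)
              (TensorProduct.lift HB.mul ∘ₗ
                TensorProduct.map (HB.str ^ m).toLinearMap (HB.str ^ (-1 : ℤ)).toLinearMap) ∘ₗ
            (TensorProduct.assoc K C H H).toLinearMap)
          (TensorProduct.map CC.str.toLinearMap (LinearMap.id : H →ₗ[K] H))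
          ((TensorProduct.tensorTensorTensorComm K (C ⊗[K] H) C H H)
            (((TensorProduct.assoc K C H C).symm
              (TensorProduct.map (CC.str.toLinearMap ∘ₗ p)
                ((TensorProduct.map HB.str.toLinearMap CC.str.toLinearMap) ∘ₗ (coact ∘ₗ p)) X))
              ⊗ₜ[K] (TensorProduct.map (HB.str.toLinearMap ∘ₗ π) (HB.str.toLinearMap ∘ₗ π) Y)))
      = thetaMap HB CC p π (pureM HB CC m ∘ₗ TensorProduct.map (coact ∘ₗ p) π)
          (rearrMap (X ⊗ₜ[K] Y)) := by
    intro X Y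
    induction X using TensorProduct.induction_on with
    | zero => simp
    | add X1 X2 ih1 ih2 => simp only [map_add, add_tmul, tmul_add, ih1, ih2]
    | tmul x1 x2 =>
      induction Y using TensorProduct.induction_on with
      | zero => simp
      | add Y1 Y2 ih1 ih2 => simp only [map_add, tmul_add, add_tmul, ih1, ih2]
      | tmul y1 y2 =>
        simp only [TensorProduct.map_tmul, LinearMap.comp_apply, rearrMap_tmul, thetaMap,
          LinearEquiv.coe_coe]
        generalize coact (p x2) = t
        induction t using TensorProduct.induction_on with
        | zero => simp
        | add t1 t2 ih1 ih2 =>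
          simp only [map_add, tmul_add, add_tmul, ih1, ih2]
        | tmul u v =>
          simp only [TensorProduct.map_tmul, TensorProduct.assoc_symm_tmul,
            TensorProduct.assoc_tmul, TensorProduct.tensorTensorTensorComm_tmul,
            TensorProduct.lift.tmul, LinearMap.comp_apply, LinearEquiv.coe_coe,
            LinearMap.id_coe, id_eq, pureM_tmul, epow_str]
          rw [epow_two]
          norm_num
  have hPsi2Theta : ∀ (X Y : A ⊗[K] A),
      (TensorProduct.map (CC.str.toLinearMap ∘ₗ p) (HB.str.toLinearMap ∘ₗ π) X)
        ⊗ₜ[K] (TensorProduct.map (CC.str.toLinearMap ∘ₗ p) (HB.str.toLinearMap ∘ₗ π) Y)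
      = thetaMap HB CC p π
          (TensorProduct.map (HB.str.toLinearMap ∘ₗ π) (CC.str.toLinearMap ∘ₗ p))
          (rearrMap (X ⊗ₜ[K] Y)) := by
    intro X Y
    induction X using TensorProduct.induction_on with
    | zero => simp
    | add X1 X2 ih1 ih2 => simp only [map_add, add_tmul, tmul_add, ih1, ih2]
    | tmul x1 x2 =>
      induction Y using TensorProduct.induction_on with
      | zero => simp
      | add Y1 Y2 ih1 ih2 => simp only [map_add, tmul_add, add_tmul, ih1, ih2]
      | tmul y1 y2 =>
        simp [thetaMap, rearrMap_tmul]
  have hCR2 : ∀ x : A,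
      TensorProduct.map (LinearMap.id : A →ₗ[K] A) (AB.comul ∘ₗ AB.str.toLinearMap) (AB.comul x)
      = TensorProduct.assoc K A A A
          (TensorProduct.map (AB.comul ∘ₗ AB.str.toLinearMap) (LinearMap.id : A →ₗ[K] A)
            (AB.comul x)) := by
    intro x
    have h1 := congrArg
      (TensorProduct.map AB.str.toLinearMap
        (TensorProduct.map AB.str.toLinearMap AB.str.toLinearMap)) (AB.hom_coassoc x)
    rw [map_map_apply, map_map_assoc, map_map_apply] at h1
    have lg1 : AB.str.toLinearMap ∘ₗ AB.str.symm.toLinearMap = LinearMap.id := by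
      ext w; simp
    have lg2 : TensorProduct.map AB.str.toLinearMap AB.str.toLinearMap ∘ₗ AB.comul
        = AB.comul ∘ₗ AB.str.toLinearMap := by
      ext w; simp [AB.comul_str]
    rw [lg1, lg2] at h1
    exact h1
  have hPI2 : ∀ (W : A ⊗[K] (A ⊗[K] A)),
      rearrMap (TensorProduct.map (LinearMap.id : (A ⊗[K] A) →ₗ[K] (A ⊗[K] A))
          (AB.comul ∘ₗ AB.str.toLinearMap) ((TensorProduct.assoc K A A A).symm W))
      = (TensorProduct.assoc K A (A ⊗[K] A) A).symm
          (TensorProduct.map (LinearMap.id : A →ₗ[K] A)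
            ((TensorProduct.assoc K A A A).symm.toLinearMap ∘ₗ
              TensorProduct.map (LinearMap.id : A →ₗ[K] A) (AB.comul ∘ₗ AB.str.toLinearMap)) W) := by
    intro W
    induction W using TensorProduct.induction_on with
    | zero => simp
    | add W1 W2 ih1 ih2 => simp only [map_add, ih1, ih2]
    | tmul x V =>
      induction V using TensorProduct.induction_on with
      | zero => simp
      | add V1 V2 ih1 ih2 => simp only [map_add, tmul_add, ih1, ih2]
      | tmul y z =>
        simp only [TensorProduct.assoc_symm_tmul, TensorProduct.map_tmul, LinearMap.comp_apply,
          LinearMap.id_coe, id_eq, LinearEquiv.coe_coe]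
        generalize AB.comul (AB.str z) = t
        induction t using TensorProduct.induction_on with
        | zero => simp
        | add t1 t2 ih1 ih2 => simp only [map_add, tmul_add, add_tmul, ih1, ih2]
        | tmul t1 t2 => simp [rearrMap]
  have hCR : ∀ a : A,
      rearrMap (TensorProduct.map AB.comul AB.comul (AB.comul a))
      = (TensorProduct.assoc K A (A ⊗[K] A) A).symm
          (TensorProduct.map AB.str.symm.toLinearMap
            ((TensorProduct.assoc K A A A).symm.toLinearMap ∘ₗ
              TensorProduct.map (LinearMap.id : A →ₗ[K] A) (AB.comul ∘ₗ AB.str.toLinearMap)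
              ∘ₗ AB.comul)
            (AB.comul a)) := by
    intro a
    have h0' : (TensorProduct.assoc K A A A).symm
        (TensorProduct.map AB.str.symm.toLinearMap AB.comul (AB.comul a))
        = TensorProduct.map AB.comul AB.str.symm.toLinearMap (AB.comul a) := by
      rw [AB.hom_coassoc a]
      exact (TensorProduct.assoc K A A A).symm_apply_apply _
    have e1 : TensorProduct.map AB.comul AB.comul (AB.comul a)
        = TensorProduct.map (LinearMap.id : (A ⊗[K] A) →ₗ[K] (A ⊗[K] A))
            (AB.comul ∘ₗ AB.str.toLinearMap)
            ((TensorProduct.assoc K A A A).symm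
              (TensorProduct.map AB.str.symm.toLinearMap AB.comul (AB.comul a))) := by
      rw [h0', map_map_apply]
      congr 1 <;> try rfl
      all_goals congr 1
      all_goals ext w
      all_goals simp
    rw [e1, hPI2, map_map_apply]
    congr 1 <;> try rfl
    all_goals congr 1
    all_goals ext w
    all_goals simp
  have hswap : ∀ a : A,
      thetaMap HB CC p π (pureM HB CC m ∘ₗ TensorProduct.map (coact ∘ₗ p) π)
        ((TensorProduct.assoc K A (A ⊗[K] A) A).symm
          (TensorProduct.map AB.str.symm.toLinearMap
            ((TensorProduct.assoc K A A A).symm.toLinearMap ∘ₗ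
              TensorProduct.map (LinearMap.id : A →ₗ[K] A) (AB.comul ∘ₗ AB.str.toLinearMap)
              ∘ₗ AB.comul)
            (AB.comul a)))
      = thetaMap HB CC p π
          (TensorProduct.map (HB.str.toLinearMap ∘ₗ π) (CC.str.toLinearMap ∘ₗ p))
        ((TensorProduct.assoc K A (A ⊗[K] A) A).symm
          (TensorProduct.map AB.str.symm.toLinearMap
            ((TensorProduct.assoc K A A A).symm.toLinearMap ∘ₗ
              TensorProduct.map (LinearMap.id : A →ₗ[K] A) (AB.comul ∘ₗ AB.str.toLinearMap)
              ∘ₗ AB.comul)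
            (AB.comul a))) := by
    intro a
    have lg : (TensorProduct.assoc K A A A).symm.toLinearMap
        ∘ₗ TensorProduct.map (LinearMap.id : A →ₗ[K] A) (AB.comul ∘ₗ AB.str.toLinearMap)
        ∘ₗ AB.comul
        = TensorProduct.map (AB.comul ∘ₗ AB.str.toLinearMap) (LinearMap.id : A →ₗ[K] A)
            ∘ₗ AB.comul := by
      ext w
      simp only [LinearMap.comp_apply, LinearEquiv.coe_coe]
      rw [hCR2 w, LinearEquiv.symm_apply_apply]
    rw [lg]
    simp only [thetaMap, LinearMap.comp_apply, LinearEquiv.coe_coe]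
    rw [map_map_assoc_symm, map_map_assoc_symm, map_map_apply, map_map_apply]
    have leg2 : TensorProduct.map (pureM HB CC m ∘ₗ TensorProduct.map (coact ∘ₗ p) π)
          (HB.str.toLinearMap ∘ₗ π)
        ∘ₗ (TensorProduct.map (AB.comul ∘ₗ AB.str.toLinearMap) (LinearMap.id : A →ₗ[K] A)
            ∘ₗ AB.comul)
        = TensorProduct.map
            (TensorProduct.map (HB.str.toLinearMap ∘ₗ π) (CC.str.toLinearMap ∘ₗ p))
            (HB.str.toLinearMap ∘ₗ π)
          ∘ₗ (TensorProduct.map (AB.comul ∘ₗ AB.str.toLinearMap) (LinearMap.id : A →ₗ[K] A)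
              ∘ₗ AB.comul) := by
      ext w
      simp only [LinearMap.comp_apply]
      rw [map_map_apply, map_map_apply]
      congr 1
      congr 1
      ext b
      simp only [LinearMap.comp_apply, LinearEquiv.coe_coe]
      exact (hstar (AB.str b)).symm
    rw [leg2]
  -- assemble Goal 1
  have hG1 : ∀ a : A,
      B.comul (admG HB CC AB p π a)
        = TensorProduct.map (admG HB CC AB p π) (admG HB CC AB p π) (AB.comul a) := by
    intro a
    have ELHS : lscMap HB CC coact m
          ∘ₗ TensorProduct.map (CC.str.toLinearMap ∘ₗ p) (HB.str.toLinearMap ∘ₗ π)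
        = thetaMap HB CC p π (pureM HB CC m ∘ₗ TensorProduct.map (coact ∘ₗ p) π)
          ∘ₗ rearrMap ∘ₗ TensorProduct.map AB.comul AB.comul := by
      apply TensorProduct.ext'
      intro x y
      simp only [LinearMap.comp_apply]
      rw [hstep2 x y]
      simp only [TensorProduct.map_tmul]
      exact hPsiTheta (AB.comul x) (AB.comul y)
    have ERHS : TensorProduct.map (admG HB CC AB p π) (admG HB CC AB p π)
        = thetaMap HB CC p π
            (TensorProduct.map (HB.str.toLinearMap ∘ₗ π) (CC.str.toLinearMap ∘ₗ p))
          ∘ₗ rearrMap ∘ₗ TensorProduct.map AB.comul AB.comul := by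
      apply TensorProduct.ext'
      intro x y
      simp only [LinearMap.comp_apply, TensorProduct.map_tmul, hadmG]
      exact hPsi2Theta (AB.comul x) (AB.comul y)
    calc B.comul (admG HB CC AB p π a)
        = lscMap HB CC coact m
            (TensorProduct.map (CC.str.toLinearMap ∘ₗ p) (HB.str.toLinearMap ∘ₗ π)
              (AB.comul a)) := by rw [hadmG]; exact hBc _
      _ = thetaMap HB CC p π (pureM HB CC m ∘ₗ TensorProduct.map (coact ∘ₗ p) π)
            (rearrMap (TensorProduct.map AB.comul AB.comul (AB.comul a))) :=
          DFunLike.congr_fun ELHS (AB.comul a)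
      _ = thetaMap HB CC p π
            (TensorProduct.map (HB.str.toLinearMap ∘ₗ π) (CC.str.toLinearMap ∘ₗ p))
            (rearrMap (TensorProduct.map AB.comul AB.comul (AB.comul a))) := by
          rw [hCR a]; exact hswap a
      _ = TensorProduct.map (admG HB CC AB p π) (admG HB CC AB p π) (AB.comul a) :=
          (DFunLike.congr_fun ERHS (AB.comul a)).symm
  -- Goal 2
  have hBe : ∀ t : C ⊗[K] H,
      B.counit t = TensorProduct.lid K K (TensorProduct.map CC.counit HB.counit t) := by
    intro t
    induction t using TensorProduct.induction_on with
    | zero => simp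
    | tmul c h => rw [hB.counit_def]; simp [smul_eq_mul]
    | add t1 t2 ih1 ih2 => rw [map_add, map_add, ih1, ih2, map_add]
  have hG2 : ∀ a : A, B.counit (admG HB CC AB p π a) = AB.counit a := by
    intro a
    rw [hadmG]
    simp only [LinearMap.comp_apply]
    rw [hBe, map_map_apply]
    have l1 : CC.counit ∘ₗ (CC.str.toLinearMap ∘ₗ p) = AB.counit := by
      ext w; simp [CC.counit_str, sys.p_counit]
    have l2 : HB.counit ∘ₗ (HB.str.toLinearMap ∘ₗ π) = AB.counit := by
      ext w; simp [HB.counit_str, sys.pi_counit]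
    rw [l1, l2]
    have h6 : AB.counit (AB.str.symm a) = AB.counit a := by
      conv_lhs => rw [← AB.counit_str (AB.str.symm a), AB.str.apply_symm_apply]
    have h5 := congrArg AB.counit (AB.counit_comul_left a)
    rw [h6] at h5
    rw [← h5]
    generalize AB.comul a = W
    induction W using TensorProduct.induction_on with
    | zero => simp
    | tmul u v =>
      simp only [TensorProduct.map_tmul, TensorProduct.lid_tmul, LinearMap.id_coe, id_eq,
        map_smul, smul_eq_mul]
    | add W1 W2 ih1 ih2 =>
      simp only [map_add, ih1, ih2]
  -- Goal 3
  have hG3 : ∀ a : A,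
      admG HB CC AB p π (AB.str a)
        = TensorProduct.map CC.str.toLinearMap HB.str.toLinearMap (admG HB CC AB p π a) := by
    intro a
    rw [hadmG]
    simp only [LinearMap.comp_apply]
    rw [AB.comul_str, map_map_apply, map_map_apply]
    congr 1 <;> ext x <;>
      simp [sys.p_str, sys.pi_str]
  exact ⟨hG1, hG2, hG3⟩
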